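/- Let p⃗ ∈ (0,1]ⁿ and η ∈ (0, p̲) where p̲ := min{min_i pᵢ, 1}. Then for any sequence of complex numbers {λ_i}_{i∈ℕ} and any sequence of dilated balls {B^{(i)}}_{i∈ℕ} ⊂ 𝔅, ∑_{i∈ℕ} |λ_i| ≤ ‖ ( ∑_{i∈ℕ} [ |λ_i| χ_{B^{(i)}} / ‖χ_{B^{(i)}}‖_{L^{p⃗}} ]^η )^{1/η} ‖_{L^{p⃗}}. -/

import Mathlib

open MeasureTheory ENNReal Set Filter Pointwise
open scoped Classical

noncomputable section

/-- One step of the iterated mixed Lebesgue norm: the `L^p(ℝ)`-norm in one real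
variable, with the usual modification (essential supremum) when `p = ∞`. -/
def lpStep (p : ℝ≥0∞) (g : ℝ → ℝ≥0∞) : ℝ≥0∞ :=
  if p = ∞ then essSup g volume
  else (∫⁻ t, (g t) ^ p.toReal) ^ (1 / p.toReal)

/-- The iterated mixed Lebesgue norm of an `ℝ≥0∞`-valued function on `ℝⁿ`:
the innermost integral is in the first variable, with exponent `p 0`. -/
def mixedNorm : (n : ℕ) → (Fin n → ℝ≥0∞) → ((Fin n → ℝ) → ℝ≥0∞) → ℝ≥0∞
  | 0, _, F => F finZeroElim
  | (n + 1), p, F =>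
      mixedNorm n (fun i => p i.succ) (fun x => lpStep (p 0) (fun t => F (Fin.cons t x)))

/-- The mixed-norm Lebesgue quasi-norm `‖f‖_{L^{p⃗}}` of a real-valued function. -/
def mixedLp {n : ℕ} (p : Fin n → ℝ≥0∞) (f : (Fin n → ℝ) → ℝ) : ℝ≥0∞ :=
  mixedNorm n p fun x => ENNReal.ofReal |f x|

/-- `A` is an expansive dilation: every (complex) eigenvalue has modulus `> 1`. -/
def IsExpansive {n : ℕ} (A : Matrix (Fin n) (Fin n) ℝ) : Prop :=
  ∀ z ∈ spectrum ℂ (A.map (algebraMap ℝ ℂ)), 1 < ‖z‖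

/-- The dilated set `B_k := A^k Δ`, `k ∈ ℤ`. -/
def Bk {n : ℕ} (A : Matrix (Fin n) (Fin n) ℝ) (Δ : Set (Fin n → ℝ)) (k : ℤ) :
    Set (Fin n → ℝ) :=
  (fun x => (A ^ k).mulVec x) '' Δ

/-- The dilated ball `x₀ + B_k`. -/
def dBall {n : ℕ} (A : Matrix (Fin n) (Fin n) ℝ) (Δ : Set (Fin n → ℝ))
    (x₀ : Fin n → ℝ) (k : ℤ) : Set (Fin n → ℝ) :=
  (fun y => x₀ + y) '' Bk A Δ k

/-- `‖χ_S‖_{L^{p⃗}}`, the mixed norm of the characteristic function of `S`. -/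
def chiNorm {n : ℕ} (p : Fin n → ℝ≥0∞) (S : Set (Fin n → ℝ)) : ℝ≥0∞ :=
  mixedNorm n p (S.indicator fun _ => (1 : ℝ≥0∞))

/-- The standing assumptions on an expansive dilation `A` and the associated
ellipsoid `Δ` (of Lebesgue measure `1`, with `Δ ⊂ rΔ ⊂ AΔ`). -/
structure IsDilationSetup {n : ℕ} (A : Matrix (Fin n) (Fin n) ℝ)
    (Δ : Set (Fin n → ℝ)) (r : ℝ) : Prop where
  expansive : IsExpansive A
  det_isUnit : IsUnit A.det
  isOpen : IsOpen Δ
  zero_mem : 0 ∈ Δ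
  bounded : Bornology.IsBounded Δ
  convex : Convex ℝ Δ
  symmetric : ∀ x ∈ Δ, -x ∈ Δ
  volume_eq_one : volume Δ = 1
  one_lt_r : 1 < r
  subset_smul : Δ ⊆ r • Δ
  smul_subset : r • Δ ⊆ (fun x => A.mulVec x) '' Δ


lemma lpStep_mono {p : ℝ≥0∞} {g h : ℝ → ℝ≥0∞} (hgh : ∀ t, g t ≤ h t) :
    lpStep p g ≤ lpStep p h := by
  unfold lpStep
  split
  · exact essSup_mono_ae (.of_forall hgh)
  · exact ENNReal.rpow_le_rpow
      (lintegral_mono fun t => ENNReal.rpow_le_rpow (hgh t) ENNReal.toReal_nonneg)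
      (by positivity)

lemma lpStep_const_mul {p : ℝ≥0∞} (hp0 : p ≠ 0) (hpt : p ≠ ∞) {c : ℝ≥0∞} (hc : c ≠ ∞)
    (g : ℝ → ℝ≥0∞) : lpStep p (fun t => c * g t) = c * lpStep p g := by
  have hq : 0 < p.toReal := ENNReal.toReal_pos hp0 hpt
  unfold lpStep
  rw [if_neg hpt, if_neg hpt]
  simp_rw [ENNReal.mul_rpow_of_nonneg _ _ hq.le]
  rw [lintegral_const_mul' _ _ (ENNReal.rpow_ne_top_of_nonneg hq.le hc),
    ENNReal.mul_rpow_of_nonneg _ _ (by positivity), ← ENNReal.rpow_mul,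
    mul_one_div, div_self hq.ne', ENNReal.rpow_one]

lemma mixedNorm_mono {n : ℕ} (p : Fin n → ℝ≥0∞) {F G : (Fin n → ℝ) → ℝ≥0∞}
    (h : ∀ x, F x ≤ G x) : mixedNorm n p F ≤ mixedNorm n p G := by
  induction n with
  | zero => exact h _
  | succ n ih =>
    exact ih _ fun x => lpStep_mono fun t => h _

lemma mixedNorm_const_mul {n : ℕ} (p : Fin n → ℝ≥0∞) (hp : ∀ i, p i ≠ 0 ∧ p i ≠ ∞)
    {c : ℝ≥0∞} (hc : c ≠ ∞) (F : (Fin n → ℝ) → ℝ≥0∞) :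
    mixedNorm n p (fun x => c * F x) = c * mixedNorm n p F := by
  induction n with
  | zero => rfl
  | succ n ih =>
    show mixedNorm n _ _ = c * mixedNorm n _ _
    rw [← ih (fun i => p i.succ) (fun i => hp i.succ) _]
    congr 1
    funext x
    exact lpStep_const_mul (hp 0).1 (hp 0).2 hc _

lemma real_amgm_aux {q l u v : ℝ} (hq0 : 0 < q) (hq1 : q ≤ 1) (hl0 : 0 ≤ l) (hl1 : l ≤ 1)
    (hu : 0 ≤ u) (hv : 0 ≤ v) :
    l ^ (1 - q) * u ^ q + (1 - l) ^ (1 - q) * v ^ q ≤ (u + v) ^ q := by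
  rcases eq_or_lt_of_le hq1 with rfl | hq1'
  · simp [Real.rpow_one]
  rcases eq_or_lt_of_le (by positivity : (0:ℝ) ≤ u + v) with huv | huv
  · have hu0 : u = 0 := by linarith
    have hv0 : v = 0 := by linarith
    simp [hu0, hv0, Real.zero_rpow hq0.ne']
  have hS : 0 < (u + v) ^ q := Real.rpow_pos_of_pos huv q
  rw [← div_le_one hS, add_div]
  have h1 : l ^ (1 - q) * u ^ q / (u + v) ^ q = (u / (u + v)) ^ q * l ^ (1 - q) := by
    rw [Real.div_rpow hu (by linarith)]; ring
  have h2 : (1 - l) ^ (1 - q) * v ^ q / (u + v) ^ q = (v / (u + v)) ^ q * (1 - l) ^ (1 - q) := by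
    rw [Real.div_rpow hv (by linarith)]; ring
  rw [h1, h2]
  have g1 : (u / (u + v)) ^ q * l ^ (1 - q) ≤ q * (u / (u + v)) + (1 - q) * l :=
    Real.geom_mean_le_arith_mean2_weighted hq0.le (by linarith)
      (div_nonneg hu (by linarith)) hl0 (by ring)
  have g2 : (v / (u + v)) ^ q * (1 - l) ^ (1 - q) ≤ q * (v / (u + v)) + (1 - q) * (1 - l) :=
    Real.geom_mean_le_arith_mean2_weighted hq0.le (by linarith)
      (div_nonneg hv (by linarith)) (by linarith) (by ring)
  calc (u / (u + v)) ^ q * l ^ (1 - q) + (v / (u + v)) ^ q * (1 - l) ^ (1 - q)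
      ≤ (q * (u / (u + v)) + (1 - q) * l) + (q * (v / (u + v)) + (1 - q) * (1 - l)) :=
        add_le_add g1 g2
    _ = q * ((u + v) / (u + v)) + (1 - q) := by ring
    _ = 1 := by rw [div_self huv.ne']; ring

lemma ennreal_amgm_aux {q l : ℝ} (hq0 : 0 < q) (hq1 : q ≤ 1) (hl0 : 0 ≤ l) (hl1 : l ≤ 1)
    (x y : ℝ≥0∞) :
    ENNReal.ofReal l ^ (1 - q) * x ^ q + ENNReal.ofReal (1 - l) ^ (1 - q) * y ^ q
      ≤ (x + y) ^ q := by
  have h1q : (0:ℝ) ≤ 1 - q := by linarith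
  rcases eq_top_or_lt_top x with rfl | hx
  · have h : (⊤ + y) ^ q = ⊤ := by
      rw [top_add]; exact ENNReal.top_rpow_of_pos hq0
    rw [h]; exact le_top
  rcases eq_top_or_lt_top y with rfl | hy
  · have h : (x + ⊤) ^ q = ⊤ := by
      rw [add_top]; exact ENNReal.top_rpow_of_pos hq0
    rw [h]; exact le_top
  rw [← ENNReal.ofReal_toReal hx.ne, ← ENNReal.ofReal_toReal hy.ne]
  have hu : (0:ℝ) ≤ x.toReal := ENNReal.toReal_nonneg
  have hv : (0:ℝ) ≤ y.toReal := ENNReal.toReal_nonneg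
  rw [← ENNReal.ofReal_add hu hv, ENNReal.ofReal_rpow_of_nonneg hu hq0.le,
    ENNReal.ofReal_rpow_of_nonneg hv hq0.le,
    ENNReal.ofReal_rpow_of_nonneg (by positivity) hq0.le,
    ENNReal.ofReal_rpow_of_nonneg hl0 h1q,
    ENNReal.ofReal_rpow_of_nonneg (by linarith) h1q,
    ← ENNReal.ofReal_mul (Real.rpow_nonneg hl0 _),
    ← ENNReal.ofReal_mul (Real.rpow_nonneg (by linarith) _),
    ← ENNReal.ofReal_add (mul_nonneg (Real.rpow_nonneg hl0 _) (Real.rpow_nonneg hu _))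
      (mul_nonneg (Real.rpow_nonneg (by linarith) _) (Real.rpow_nonneg hv _))]
  exact ENNReal.ofReal_le_ofReal (real_amgm_aux hq0 hq1 hl0 hl1 hu hv)

lemma real_split_key {q a b : ℝ} (hq0 : 0 < q) (ha : 0 < a) (hb : 0 < b) :
    (a / (a + b)) ^ (1 - q) * a ^ q + (b / (a + b)) ^ (1 - q) * b ^ q = (a + b) ^ q := by
  have hab : 0 < a + b := by linarith
  rw [Real.div_rpow ha.le hab.le, Real.div_rpow hb.le hab.le,
    div_mul_eq_mul_div, div_mul_eq_mul_div, ← Real.rpow_add ha, ← Real.rpow_add hb,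
    show (1:ℝ) - q + q = 1 by ring, Real.rpow_one, Real.rpow_one, ← add_div,
    eq_comm, eq_div_iff (Real.rpow_pos_of_pos hab _).ne', ← Real.rpow_add hab,
    show q + (1 - q) = 1 by ring, Real.rpow_one]

lemma le_lpStep_add {p : ℝ≥0∞} (hp0 : p ≠ 0) (hp1 : p ≤ 1) (f g : ℝ → ℝ≥0∞) :
    lpStep p f + lpStep p g ≤ lpStep p (fun t => f t + g t) := by
  have hpt : p ≠ ∞ := (hp1.trans_lt ENNReal.one_lt_top).ne
  have hq0 : 0 < p.toReal := ENNReal.toReal_pos hp0 hpt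
  have hq1 : p.toReal ≤ 1 := by
    have := ENNReal.toReal_mono ENNReal.one_ne_top hp1
    simpa using this
  set q := p.toReal with hq
  have hmono_f : lpStep p f ≤ lpStep p (fun t => f t + g t) :=
    lpStep_mono fun t => le_self_add
  have hmono_g : lpStep p g ≤ lpStep p (fun t => f t + g t) :=
    lpStep_mono fun t => le_add_self
  set F := lpStep p f with hF
  set G := lpStep p g with hG
  rcases eq_or_ne F 0 with hF0 | hF0
  · rw [hF0, zero_add]; exact hmono_g
  rcases eq_or_ne G 0 with hG0 | hG0
  · rw [hG0, add_zero]; exact hmono_f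
  rcases eq_or_ne F ∞ with hFt | hFt
  · have : lpStep p (fun t => f t + g t) = ∞ := top_le_iff.mp (hFt ▸ hmono_f)
    rw [this]; exact le_top
  rcases eq_or_ne G ∞ with hGt | hGt
  · have : lpStep p (fun t => f t + g t) = ∞ := top_le_iff.mp (hGt ▸ hmono_g)
    rw [this]; exact le_top
  set a := F.toReal with ha'
  set b := G.toReal with hb'
  have ha : 0 < a := ENNReal.toReal_pos hF0 hFt
  have hb : 0 < b := ENNReal.toReal_pos hG0 hGt
  have hab : 0 < a + b := by linarith
  set l := a / (a + b) with hl'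
  have hl0 : 0 ≤ l := by positivity
  have hl1 : l ≤ 1 := by rw [hl', div_le_one hab]; linarith
  have h1l : 1 - l = b / (a + b) := by rw [hl']; field_simp; ring
  have h1q : (0:ℝ) ≤ 1 - q := by linarith
  have hFq : F ^ q = ∫⁻ t, f t ^ q := by
    rw [hF]
    show (if p = ∞ then essSup f volume else (∫⁻ t, (f t) ^ p.toReal) ^ (1 / p.toReal)) ^ q = _
    rw [if_neg hpt, one_div, ENNReal.rpow_inv_rpow hq0.ne']
  have hGq : G ^ q = ∫⁻ t, g t ^ q := by
    rw [hG]
    show (if p = ∞ then essSup g volume else (∫⁻ t, (g t) ^ p.toReal) ^ (1 / p.toReal)) ^ q = _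
    rw [if_neg hpt, one_div, ENNReal.rpow_inv_rpow hq0.ne']
  have hiden : (F + G) ^ q
      = ENNReal.ofReal l ^ (1 - q) * F ^ q + ENNReal.ofReal (1 - l) ^ (1 - q) * G ^ q := by
    rw [← ENNReal.ofReal_toReal hFt, ← ENNReal.ofReal_toReal hGt, ← ha', ← hb',
      ← ENNReal.ofReal_add ha.le hb.le,
      ENNReal.ofReal_rpow_of_nonneg hab.le hq0.le,
      ENNReal.ofReal_rpow_of_nonneg ha.le hq0.le,
      ENNReal.ofReal_rpow_of_nonneg hb.le hq0.le,
      ENNReal.ofReal_rpow_of_nonneg hl0 h1q,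
      ENNReal.ofReal_rpow_of_nonneg (by linarith) h1q,
      ← ENNReal.ofReal_mul (Real.rpow_nonneg hl0 _),
      ← ENNReal.ofReal_mul (Real.rpow_nonneg (by linarith) _),
      ← ENNReal.ofReal_add (mul_nonneg (Real.rpow_nonneg hl0 _) (Real.rpow_nonneg ha.le _))
        (mul_nonneg (Real.rpow_nonneg (by linarith) _) (Real.rpow_nonneg hb.le _)), h1l,
      real_split_key hq0 ha hb]
  have hc1 : ENNReal.ofReal l ^ (1 - q) ≠ ∞ :=
    ENNReal.rpow_ne_top_of_nonneg h1q ENNReal.ofReal_ne_top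
  have hc2 : ENNReal.ofReal (1 - l) ^ (1 - q) ≠ ∞ :=
    ENNReal.rpow_ne_top_of_nonneg h1q ENNReal.ofReal_ne_top
  have key : (F + G) ^ q ≤ ∫⁻ t, (f t + g t) ^ q := by
    rw [hiden, hFq, hGq, ← lintegral_const_mul' _ _ hc1, ← lintegral_const_mul' _ _ hc2]
    refine (MeasureTheory.le_lintegral_add _ _).trans (lintegral_mono fun t => ?_)
    exact ennreal_amgm_aux hq0 hq1 hl0 hl1 _ _
  calc F + G = ((F + G) ^ q) ^ (1/q) := by
        rw [one_div, ENNReal.rpow_rpow_inv hq0.ne']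
    _ ≤ (∫⁻ t, (f t + g t) ^ q) ^ (1/q) := ENNReal.rpow_le_rpow key (by positivity)
    _ = lpStep p (fun t => f t + g t) := by rw [lpStep, if_neg hpt]

lemma le_mixedNorm_add {n : ℕ} (p : Fin n → ℝ≥0∞) (hp : ∀ i, p i ≠ 0 ∧ p i ≤ 1)
    (F G : (Fin n → ℝ) → ℝ≥0∞) :
    mixedNorm n p F + mixedNorm n p G ≤ mixedNorm n p (fun x => F x + G x) := by
  induction n with
  | zero => exact le_rfl
  | succ n ih =>
    show mixedNorm n _ _ + mixedNorm n _ _ ≤ mixedNorm n _ _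
    refine le_trans (ih (fun i => p i.succ) (fun i => hp i.succ) _ _)
      (mixedNorm_mono _ fun x => ?_)
    exact le_lpStep_add (hp 0).1 (hp 0).2 _ _

lemma sum_mixedNorm_le {n : ℕ} (p : Fin n → ℝ≥0∞) (hp : ∀ i, p i ≠ 0 ∧ p i ≤ 1)
    {ι : Type*} (s : Finset ι) (f : ι → (Fin n → ℝ) → ℝ≥0∞) :
    ∑ i ∈ s, mixedNorm n p (f i) ≤ mixedNorm n p (fun x => ∑ i ∈ s, f i x) := by
  classical
  induction s using Finset.induction with
  | empty => simp
  | insert _ _ hnotmem ih =>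
    rename_i a s
    rw [Finset.sum_insert hnotmem]
    simp_rw [Finset.sum_insert hnotmem]
    exact le_trans (add_le_add_right ih _) (le_mixedNorm_add p hp _ _)

lemma ind_rpow_eq {S : Set ℝ} {q : ℝ} (hq : 0 < q) (t : ℝ) :
    (S.indicator (fun _ => (1:ℝ≥0∞)) t) ^ q = S.indicator (fun _ => (1:ℝ≥0∞)) t := by
  classical
  rw [Set.indicator_apply]
  split
  · exact ENNReal.one_rpow _
  · exact ENNReal.zero_rpow_of_pos hq

lemma ind_le_one {α : Type*} (S : Set α) (y : α) :
    S.indicator (fun _ => (1:ℝ≥0∞)) y ≤ 1 := by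
  classical
  rw [Set.indicator_apply]; split <;> simp

lemma lpStep_ind_Ioo {p : ℝ≥0∞} (hp0 : p ≠ 0) (hpt : p ≠ ∞) (a b : ℝ) :
    lpStep p ((Ioo a b).indicator (fun _ => (1:ℝ≥0∞)))
      = ENNReal.ofReal (b - a) ^ (1 / p.toReal) := by
  have hq : 0 < p.toReal := ENNReal.toReal_pos hp0 hpt
  rw [lpStep, if_neg hpt]
  congr 1
  simp_rw [ind_rpow_eq hq]
  rw [show (fun _ : ℝ => (1:ℝ≥0∞)) = (1 : ℝ → ℝ≥0∞) from rfl,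
    lintegral_indicator_one measurableSet_Ioo, Real.volume_Ioo]

lemma mixedNorm_box {n : ℕ} (p : Fin n → ℝ≥0∞) (hp : ∀ i, p i ≠ 0 ∧ p i ≠ ∞)
    (a b : Fin n → ℝ) :
    mixedNorm n p (fun x => ∏ i, (Ioo (a i) (b i)).indicator (fun _ => (1:ℝ≥0∞)) (x i))
      = ∏ i, ENNReal.ofReal (b i - a i) ^ (1 / (p i).toReal) := by
  induction n with
  | zero => simp [mixedNorm]
  | succ n ih =>
    have hC : ∀ x : Fin n → ℝ,
        (∏ i : Fin n, (Ioo (a i.succ) (b i.succ)).indicator (fun _ => (1:ℝ≥0∞)) (x i)) ≠ ∞ :=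
      fun x => ((Finset.prod_le_one (fun _ _ => zero_le)
        (fun i _ => ind_le_one _ _)).trans_lt ENNReal.one_lt_top).ne
    have hconst : ENNReal.ofReal (b 0 - a 0) ^ (1 / (p 0).toReal) ≠ ∞ :=
      ENNReal.rpow_ne_top_of_nonneg (by positivity) ENNReal.ofReal_ne_top
    show mixedNorm n _ _ = _
    have step : (fun x : Fin n → ℝ => lpStep (p 0) (fun t : ℝ =>
          ∏ i : Fin (n+1), (Ioo (a i) (b i)).indicator (fun _ => (1:ℝ≥0∞)) ((Fin.cons t x : Fin (n+1) → ℝ) i)))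
        = fun x => ENNReal.ofReal (b 0 - a 0) ^ (1 / (p 0).toReal) *
            ∏ i : Fin n, (Ioo (a i.succ) (b i.succ)).indicator (fun _ => (1:ℝ≥0∞)) (x i) := by
      funext x
      have harg : (fun t : ℝ => ∏ i : Fin (n+1),
            (Ioo (a i) (b i)).indicator (fun _ => (1:ℝ≥0∞)) ((Fin.cons t x : Fin (n+1) → ℝ) i))
          = fun t : ℝ => (∏ i : Fin n, (Ioo (a i.succ) (b i.succ)).indicator
              (fun _ => (1:ℝ≥0∞)) (x i)) * (Ioo (a 0) (b 0)).indicator (fun _ => (1:ℝ≥0∞)) t := by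
        funext t
        rw [Fin.prod_univ_succ]
        simp [mul_comm]
      rw [harg, lpStep_const_mul (hp 0).1 (hp 0).2 (hC x), lpStep_ind_Ioo (hp 0).1 (hp 0).2,
        mul_comm]
    rw [step, mixedNorm_const_mul _ (fun i => hp i.succ) hconst,
      ih (fun i => p i.succ) (fun i => hp i.succ) (fun i => a i.succ) (fun i => b i.succ),
      Fin.prod_univ_succ]

lemma prod_ind_eq {n : ℕ} (a b : Fin n → ℝ) (x : Fin n → ℝ) :
    (∏ i, (Ioo (a i) (b i)).indicator (fun _ => (1:ℝ≥0∞)) (x i))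
      = (Set.univ.pi fun i => Ioo (a i) (b i)).indicator (fun _ => (1:ℝ≥0∞)) x := by
  classical
  by_cases h : x ∈ Set.univ.pi fun i => Ioo (a i) (b i)
  · rw [Set.indicator_of_mem h]
    exact Finset.prod_eq_one fun i _ => Set.indicator_of_mem (h i (Set.mem_univ i)) _
  · rw [Set.indicator_of_notMem h]
    rw [Set.mem_pi] at h
    push_neg at h
    obtain ⟨i, _, hi⟩ := h
    exact Finset.prod_eq_zero (Finset.mem_univ i) (Set.indicator_of_notMem hi _)

lemma chiNorm_pos {n : ℕ} (p : Fin n → ℝ≥0∞) (hp : ∀ i, p i ≠ 0 ∧ p i ≠ ∞)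
    {S : Set (Fin n → ℝ)} (hS : IsOpen S) {z : Fin n → ℝ} (hz : z ∈ S) :
    0 < chiNorm p S := by
  obtain ⟨ε, hε, hball⟩ := Metric.isOpen_iff.mp hS z hz
  set a : Fin n → ℝ := fun i => z i - ε/2 with ha
  set b : Fin n → ℝ := fun i => z i + ε/2 with hb
  have hsub : ∀ x, (∏ i, (Ioo (a i) (b i)).indicator (fun _ => (1:ℝ≥0∞)) (x i))
      ≤ S.indicator (fun _ => (1:ℝ≥0∞)) x := by
    intro x
    rw [prod_ind_eq]
    refine Set.indicator_le_indicator_of_subset ?_ (fun _ => zero_le) x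
    intro y hy
    apply hball
    rw [Metric.mem_ball]
    have hcoord : ∀ i, dist (y i) (z i) ≤ ε/2 := by
      intro i
      have := hy i (Set.mem_univ i)
      simp only [ha, hb, Set.mem_Ioo] at this
      rw [Real.dist_eq, abs_le]
      constructor <;> [linarith [this.1]; linarith [this.2]]
    calc dist y z ≤ ε/2 := (dist_pi_le_iff (by positivity)).mpr hcoord
      _ < ε := by linarith
  have hle := mixedNorm_mono p hsub
  rw [mixedNorm_box p hp] at hle
  refine lt_of_lt_of_le ?_ hle
  refine CanonicallyOrderedAdd.prod_pos.mpr fun i _ => ?_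
  refine ENNReal.rpow_pos ?_ ENNReal.ofReal_ne_top
  rw [ENNReal.ofReal_pos]
  simp [ha, hb]; linarith

lemma chiNorm_lt_top {n : ℕ} (p : Fin n → ℝ≥0∞) (hp : ∀ i, p i ≠ 0 ∧ p i ≠ ∞)
    {S : Set (Fin n → ℝ)} (hS : Bornology.IsBounded S) : chiNorm p S < ∞ := by
  obtain ⟨R, hR⟩ := hS.subset_closedBall 0
  set a : Fin n → ℝ := fun _ => -(|R| + 1) with ha
  set b : Fin n → ℝ := fun _ => |R| + 1 with hb
  have hsub : ∀ x, S.indicator (fun _ => (1:ℝ≥0∞)) x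
      ≤ (∏ i, (Ioo (a i) (b i)).indicator (fun _ => (1:ℝ≥0∞)) (x i)) := by
    intro x
    rw [prod_ind_eq]
    refine Set.indicator_le_indicator_of_subset ?_ (fun _ => zero_le) x
    intro y hy i _
    have h1 : dist y 0 ≤ R := hR hy
    have h2 : dist (y i) 0 ≤ dist y 0 := dist_le_pi_dist y 0 i
    have h3 : |y i| ≤ R := by
      rw [Real.dist_eq] at h2; simpa using h2.trans h1
    have h4 := abs_le.mp (h3.trans (le_abs_self R))
    simp only [ha, hb, Set.mem_Ioo]
    constructor <;> [linarith [h4.1]; linarith [h4.2]]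
  have hle := mixedNorm_mono p hsub
  rw [mixedNorm_box p hp] at hle
  refine lt_of_le_of_lt (le_trans ?_ hle) ?_
  · exact le_rfl
  refine ENNReal.prod_lt_top fun i _ => ?_
  exact ENNReal.rpow_lt_top_of_nonneg (by positivity) ENNReal.ofReal_ne_top

lemma Bk_eq_preimage {n : ℕ} {A : Matrix (Fin n) (Fin n) ℝ} (hA : IsUnit A.det)
    (Δ : Set (Fin n → ℝ)) (k : ℤ) :
    Bk A Δ k = (fun y => ((A ^ k)⁻¹).mulVec y) ⁻¹' Δ := by
  have hdet : IsUnit (A ^ k).det := hA.det_zpow k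
  ext y
  constructor
  · rintro ⟨x, hx, rfl⟩
    simpa [Matrix.mulVec_mulVec, Matrix.nonsing_inv_mul _ hdet, Matrix.one_mulVec] using hx
  · intro hy
    exact ⟨_, hy, by
      simp [Matrix.mulVec_mulVec, Matrix.mul_nonsing_inv _ hdet, Matrix.one_mulVec]⟩

lemma dBall_isOpen {n : ℕ} {A : Matrix (Fin n) (Fin n) ℝ} {Δ : Set (Fin n → ℝ)} {r : ℝ}
    (h : IsDilationSetup A Δ r) (x₀ : Fin n → ℝ) (k : ℤ) : IsOpen (dBall A Δ x₀ k) := by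
  have hBk : IsOpen (Bk A Δ k) := by
    rw [Bk_eq_preimage h.det_isUnit]
    exact h.isOpen.preimage (continuous_const.matrix_mulVec continuous_id)
  have heq : dBall A Δ x₀ k = (Homeomorph.addLeft x₀) '' Bk A Δ k := rfl
  rw [heq]
  exact (Homeomorph.addLeft x₀).isOpen_image.mpr hBk

lemma mem_dBall_self {n : ℕ} {A : Matrix (Fin n) (Fin n) ℝ} {Δ : Set (Fin n → ℝ)} {r : ℝ}
    (h : IsDilationSetup A Δ r) (x₀ : Fin n → ℝ) (k : ℤ) : x₀ ∈ dBall A Δ x₀ k :=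
  ⟨0, ⟨0, h.zero_mem, Matrix.mulVec_zero _⟩, by simp⟩

lemma dBall_isBounded {n : ℕ} {A : Matrix (Fin n) (Fin n) ℝ} {Δ : Set (Fin n → ℝ)} {r : ℝ}
    (h : IsDilationSetup A Δ r) (x₀ : Fin n → ℝ) (k : ℤ) :
    Bornology.IsBounded (dBall A Δ x₀ k) := by
  have hB : Bornology.IsBounded (Bk A Δ k) := by
    have himg := ((Matrix.mulVecLin (A ^ k)).toContinuousLinearMap).lipschitz.isBounded_image
      h.bounded
    have heq : ⇑((Matrix.mulVecLin (A ^ k)).toContinuousLinearMap) '' Δ = Bk A Δ k := by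
      apply Set.image_congr
      intro x _
      simp
    rwa [heq] at himg
  obtain ⟨R, hR⟩ := hB.subset_closedBall 0
  refine Metric.isBounded_closedBall.subset (?_ : dBall A Δ x₀ k ⊆ Metric.closedBall x₀ R)
  rintro _ ⟨y, hy, rfl⟩
  have h1 : dist y 0 ≤ R := hR hy
  rw [Metric.mem_closedBall]
  calc dist (x₀ + y) x₀ = dist (x₀ + y) (x₀ + 0) := by rw [add_zero]
    _ = dist y 0 := dist_add_left _ _ _
    _ ≤ R := h1

lemma sum_rpow_le {ι : Type*} (s : Finset ι) (f : ι → ℝ≥0∞) {η : ℝ}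
    (hη0 : 0 < η) (hη1 : η ≤ 1) :
    (∑ i ∈ s, f i) ^ η ≤ ∑ i ∈ s, f i ^ η := by
  classical
  induction s using Finset.induction with
  | empty => simp [ENNReal.zero_rpow_of_pos hη0]
  | insert _ _ hnotmem ih =>
    rename_i a s
    rw [Finset.sum_insert hnotmem, Finset.sum_insert hnotmem]
    exact le_trans (ENNReal.rpow_add_le_add_rpow _ _ hη0.le hη1) (add_le_add_right ih _)


/-- For `p⃗ ∈ (0,1]ⁿ` and `η ∈ (0, p̲)`:
`∑ᵢ |λᵢ| ≤ ‖ ( ∑ᵢ [ |λᵢ| χ_{B^{(i)}} / ‖χ_{B^{(i)}}‖_{L^{p⃗}} ]^η )^{1/η} ‖_{L^{p⃗}}`. -/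
theorem sum_abs_le_seqNorm {n : ℕ} (hn : 0 < n)
    (A : Matrix (Fin n) (Fin n) ℝ) (Δ : Set (Fin n → ℝ)) (r : ℝ)
    (h : IsDilationSetup A Δ r) (p : Fin n → ℝ≥0∞)
    (hp : ∀ i, 0 < p i ∧ p i ≤ 1) (η : ℝ) (hη0 : 0 < η)
    (hη : ENNReal.ofReal η < min (⨅ i, p i) 1)
    (lam : ℕ → ℂ) (xc : ℕ → Fin n → ℝ) (lc : ℕ → ℤ) :
    ∑' i, ENNReal.ofReal ‖lam i‖ ≤
      mixedNorm n p fun x =>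
        (∑' i, ((ENNReal.ofReal ‖lam i‖ *
          (dBall A Δ (xc i) (lc i)).indicator (fun _ => (1 : ℝ≥0∞)) x) /
          chiNorm p (dBall A Δ (xc i) (lc i))) ^ η) ^ (1 / η) := by
  classical
  have hp0 : ∀ i, p i ≠ 0 := fun i => (hp i).1.ne'
  have hpt : ∀ i, p i ≠ ∞ := fun i => ((hp i).2.trans_lt ENNReal.one_lt_top).ne
  have hη1 : η < 1 := ENNReal.ofReal_lt_one.mp (hη.trans_le (min_le_right _ _))
  set c : ℕ → ℝ≥0∞ := fun i => ENNReal.ofReal ‖lam i‖ with hc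
  set B : ℕ → Set (Fin n → ℝ) := fun i => dBall A Δ (xc i) (lc i) with hB
  set N : ℕ → ℝ≥0∞ := fun i => chiNorm p (B i) with hN
  have hN0 : ∀ i, N i ≠ 0 :=
    fun i => (chiNorm_pos p (fun j => ⟨hp0 j, hpt j⟩) (dBall_isOpen h _ _)
      (mem_dBall_self h (xc i) (lc i))).ne'
  have hNt : ∀ i, N i ≠ ∞ :=
    fun i => (chiNorm_lt_top p (fun j => ⟨hp0 j, hpt j⟩) (dBall_isBounded h _ _)).ne
  rw [ENNReal.tsum_eq_iSup_sum]
  refine iSup_le fun s => ?_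
  have hpt_bound : ∀ x, (∑ i ∈ s, (c i / N i) * (B i).indicator (fun _ => (1:ℝ≥0∞)) x)
      ≤ (∑' i, ((c i * (B i).indicator (fun _ => (1:ℝ≥0∞)) x) / N i) ^ η) ^ (1/η) := by
    intro x
    have h1 : ∀ i, (c i / N i) * (B i).indicator (fun _ => (1:ℝ≥0∞)) x
        = (c i * (B i).indicator (fun _ => (1:ℝ≥0∞)) x) / N i := fun i => by
      simp only [div_eq_mul_inv]
      ring
    simp_rw [h1]
    calc (∑ i ∈ s, (c i * (B i).indicator (fun _ => (1:ℝ≥0∞)) x) / N i)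
        = ((∑ i ∈ s, (c i * (B i).indicator (fun _ => (1:ℝ≥0∞)) x) / N i) ^ η) ^ (1/η) := by
          rw [one_div, ENNReal.rpow_rpow_inv hη0.ne']
      _ ≤ ((∑ i ∈ s, ((c i * (B i).indicator (fun _ => (1:ℝ≥0∞)) x) / N i) ^ η)) ^ (1/η) :=
          ENNReal.rpow_le_rpow (sum_rpow_le s _ hη0 hη1.le) (by positivity)
      _ ≤ (∑' i, ((c i * (B i).indicator (fun _ => (1:ℝ≥0∞)) x) / N i) ^ η) ^ (1/η) :=
          ENNReal.rpow_le_rpow (ENNReal.sum_le_tsum s) (by positivity)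
  refine le_trans ?_ (mixedNorm_mono p hpt_bound)
  refine le_trans ?_ (sum_mixedNorm_le p (fun i => ⟨hp0 i, (hp i).2⟩) s _)
  refine Finset.sum_le_sum fun i _ => ?_
  have hdiv : c i / N i ≠ ∞ :=
    ENNReal.mul_ne_top ENNReal.ofReal_ne_top (ENNReal.inv_ne_top.mpr (hN0 i))
  rw [mixedNorm_const_mul p (fun j => ⟨hp0 j, hpt j⟩) hdiv]
  have : mixedNorm n p (fun x => (B i).indicator (fun _ => (1:ℝ≥0∞)) x) = N i := rfl
  rw [this, ENNReal.div_mul_cancel (hN0 i) (hNt i)]
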